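/- Let a ∈ ℝ, w ∈ ℂ with w ≠ 0 and |a| < |w|, let τ > 0, k ∈ ℤ, and Ω ∈ ℝ with Ω ≠ 0. Then the following are equivalent: (i) a = |w|·cos(Arg(w) − τ·Ω), Ω = |w|·sin(Arg(w) − τ·Ω), and Arg(w) − τ·Ω ∈ (−π + 2kπ, 2kπ); (ii) Ω = −√(|w|² − a²) and τ·Ω = Arg(w) + arccos(a/|w|) − 2kπ. -/

import Mathlib

/-- Angular frequency equations with `Arg(w) − τΩ ∈ (−π + 2kπ, 2kπ)` are equivalent to
`Ω = −√(|w|² − a²)` and `τΩ = Arg(w) + arccos(a/|w|) − 2kπ`. -/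
theorem angular_frequency_lower (a : ℝ) (w : ℂ) (hw : w ≠ 0) (hab : |a| < ‖w‖)
    (τ : ℝ) (hτ : 0 < τ) (k : ℤ) (Ω : ℝ) (hΩ : Ω ≠ 0) :
    (a = ‖w‖ * Real.cos (w.arg - τ * Ω) ∧
        Ω = ‖w‖ * Real.sin (w.arg - τ * Ω) ∧
        w.arg - τ * Ω ∈ Set.Ioo (-Real.pi + 2 * (k : ℝ) * Real.pi) (2 * (k : ℝ) * Real.pi)) ↔
      (Ω = -Real.sqrt (‖w‖ ^ 2 - a ^ 2) ∧
        τ * Ω = w.arg + Real.arccos (a / ‖w‖) - 2 * (k : ℝ) * Real.pi) := by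
  have hr : 0 < ‖w‖ := norm_pos_iff.mpr hw
  set r := ‖w‖ with hrdef
  obtain ⟨hra, har⟩ := abs_lt.mp hab
  have ha1 : -1 < a / r := by rw [neg_lt, ← neg_div]; exact (div_lt_one hr).mpr (by linarith)
  have ha2 : a / r < 1 := (div_lt_one hr).mpr har
  constructor
  · rintro ⟨ha, hO, hθ1, hθ2⟩
    set θ := w.arg - τ * Ω with hθ
    have h1 : -Real.pi < θ - k * (2 * Real.pi) := by push_cast; linarith
    have h2 : θ - k * (2 * Real.pi) < 0 := by push_cast; linarith
    have hsneg : Real.sin θ < 0 := by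
      rw [← Real.sin_sub_int_mul_two_pi θ k]
      exact Real.sin_neg_of_neg_of_neg_pi_lt h2 h1
    have hΩneg : Ω < 0 := by rw [hO]; exact mul_neg_of_pos_of_neg hr hsneg
    have hsq : Ω ^ 2 = r ^ 2 - a ^ 2 := by
      rw [hO, ha]
      linear_combination r ^ 2 * Real.sin_sq_add_cos_sq θ
    have hΩeq : Ω = -Real.sqrt (r ^ 2 - a ^ 2) := by
      have h3 : Real.sqrt (r ^ 2 - a ^ 2) = -Ω := by
        rw [← hsq, Real.sqrt_sq_eq_abs, abs_of_neg hΩneg]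
      linarith
    refine ⟨hΩeq, ?_⟩
    have hcos : a / r = Real.cos θ := by field_simp [ha]; exact ha
    have hac : Real.arccos (a / r) = k * (2 * Real.pi) - θ := by
      rw [hcos, ← Real.cos_int_mul_two_pi_sub θ k]
      exact Real.arccos_cos (by linarith) (by linarith)
    rw [hac, hθ]; push_cast; ring
  · rintro ⟨hΩeq, hτΩ⟩
    have hθeq : w.arg - τ * Ω = k * (2 * Real.pi) - Real.arccos (a / r) := by
      push_cast; linarith
    have hap : 0 < Real.arccos (a / r) := Real.arccos_pos.mpr ha2
    have hal : Real.arccos (a / r) < Real.pi := by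
      by_contra h
      have := Real.arccos_le_pi (a / r)
      have heq : Real.arccos (a / r) = Real.pi := le_antisymm this (not_lt.mp h)
      rw [Real.arccos_eq_pi] at heq
      linarith
    have hcosθ : Real.cos (w.arg - τ * Ω) = a / r := by
      rw [hθeq, Real.cos_int_mul_two_pi_sub, Real.cos_arccos ha1.le ha2.le]
    have hsinθ : Real.sin (w.arg - τ * Ω) = -Real.sqrt (1 - (a / r) ^ 2) := by
      rw [hθeq, Real.sin_int_mul_two_pi_sub, Real.sin_arccos]
    refine ⟨?_, ?_, ?_, ?_⟩
    · rw [hcosθ]; field_simp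
    · rw [hsinθ, hΩeq]
      rw [mul_neg, neg_inj]
      rw [← Real.sqrt_sq hr.le, ← Real.sqrt_mul (sq_nonneg r)]
      congr 1
      field_simp
      rw [Real.sq_sqrt (sq_nonneg r)]
    · rw [hθeq]; push_cast; linarith
    · rw [hθeq]; push_cast; linarith
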